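/- arXiv:cond-mat/0411726 — 3 statements merged into one kernel-verified Lean document; each statement's English description precedes it below -/
import Mathlib

section
/- Let X be a real random variable with symmetric distribution such that E[log cosh X] < ∞, and let t ∈ [−1,1]. Then E[log(1 + t·tanh X)] = −∑_{n=1}^∞ (t^{2n}/(2n))·E[tanh^{2n}(X)], both sides being finite. -/
open MeasureTheory ProbabilityTheory

lemma one_sub_tanh_sq' (x : ℝ) : 1 - Real.tanh x ^ 2 = (Real.cosh x ^ 2)⁻¹ := by
  have hc : Real.cosh x ≠ 0 := ne_of_gt (Real.cosh_pos x)
  rw [Real.tanh_eq_sinh_div_cosh, div_pow]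
  have h := Real.cosh_sq_sub_sinh_sq x
  field_simp
  exact h

lemma measurable_tanh' : Measurable Real.tanh := by
  have h : Real.tanh = fun x => Real.sinh x / Real.cosh x := funext Real.tanh_eq_sinh_div_cosh
  rw [h]
  exact Real.continuous_sinh.measurable.div Real.continuous_cosh.measurable

lemma tanh_sq_lt_one' (x : ℝ) : Real.tanh x ^ 2 < 1 := by
  have h := one_sub_tanh_sq' x
  have h2 : (0:ℝ) < (Real.cosh x ^ 2)⁻¹ := by positivity
  linarith

lemma log_one_sub_tanh_sq' (x : ℝ) :
    Real.log (1 - Real.tanh x ^ 2) = -(2 * Real.log (Real.cosh x)) := by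
  rw [one_sub_tanh_sq', Real.log_inv, Real.log_pow]
  push_cast
  ring

lemma abs_log_one_add_le' {x a : ℝ} (ha : a ^ 2 ≤ Real.tanh x ^ 2) :
    |Real.log (1 + a)| ≤ 2 * Real.log (Real.cosh x) + Real.log 2 := by
  have ht1 : Real.tanh x ^ 2 < 1 := tanh_sq_lt_one' x
  have ha1 : a ^ 2 < 1 := lt_of_le_of_lt ha ht1
  have h1 : (0:ℝ) < 1 + a := by nlinarith [sq_nonneg (1 + a)]
  have h2 : (0:ℝ) < 1 - a := by nlinarith [sq_nonneg (1 - a)]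
  have hlc : 0 ≤ Real.log (Real.cosh x) := Real.log_nonneg (Real.one_le_cosh x)
  have hl2 : 0 ≤ Real.log 2 := Real.log_nonneg (by norm_num)
  have hsqpos : (0:ℝ) < 1 - a ^ 2 := by nlinarith
  have htpos : (0:ℝ) < 1 - Real.tanh x ^ 2 := by linarith
  have hmul : Real.log (1 - a ^ 2) = Real.log (1 + a) + Real.log (1 - a) := by
    rw [show (1:ℝ) - a ^ 2 = (1 + a) * (1 - a) by ring, Real.log_mul h1.ne' h2.ne']
  have hlow : -(2 * Real.log (Real.cosh x)) ≤ Real.log (1 - a ^ 2) := by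
    rw [← log_one_sub_tanh_sq' x]
    exact Real.log_le_log htpos (by linarith)
  have hup : Real.log (1 + a) ≤ Real.log 2 := Real.log_le_log h1 (by nlinarith)
  have hup' : Real.log (1 - a) ≤ Real.log 2 := Real.log_le_log h2 (by nlinarith)
  rw [abs_le]
  constructor
  · linarith
  · linarith

/-- If `X` is a symmetric real random variable with `E[log cosh X] < ∞` and
`t ∈ [−1,1]`, then `E[log(1 + t·tanh X)] = −∑_{n=1}^∞ (t^{2n}/(2n))·E[tanh^{2n} X]`,
both sides being finite. -/
theorem integral_log_one_add_tanh (Ω : Type) [MeasureSpace Ω]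
    [IsProbabilityMeasure (ℙ : Measure Ω)]
    (X : Ω → ℝ) (hXmeas : Measurable X)
    (hXsymm : Measure.map X ℙ = Measure.map (fun ω => -X ω) ℙ)
    (hXint : Integrable (fun ω => Real.log (Real.cosh (X ω))) ℙ)
    (t : ℝ) (ht : t ∈ Set.Icc (-1 : ℝ) 1) :
    Integrable (fun ω => Real.log (1 + t * Real.tanh (X ω))) ℙ ∧
    Summable (fun n : ℕ =>
      t ^ (2 * (n + 1)) / (2 * (n + 1) : ℝ) * ∫ ω, Real.tanh (X ω) ^ (2 * (n + 1)) ∂ℙ) ∧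
    ∫ ω, Real.log (1 + t * Real.tanh (X ω)) ∂ℙ
      = -∑' n : ℕ,
          t ^ (2 * (n + 1)) / (2 * (n + 1) : ℝ) * ∫ ω, Real.tanh (X ω) ^ (2 * (n + 1)) ∂ℙ := by
  obtain ⟨ht1, ht2⟩ := ht
  have htsq : t ^ 2 ≤ 1 := by nlinarith
  set u : Ω → ℝ := fun ω => Real.tanh (X ω) with hu
  have humeas : Measurable u := measurable_tanh'.comp hXmeas
  have hasq : ∀ ω, (t * u ω) ^ 2 ≤ u ω ^ 2 := by
    intro ω
    rw [mul_pow]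
    nlinarith [sq_nonneg (u ω)]
  have hulto : ∀ ω, (t * u ω) ^ 2 < 1 := fun ω =>
    lt_of_le_of_lt (hasq ω) (tanh_sq_lt_one' (X ω))
  have hpos : ∀ ω, (0:ℝ) < 1 + t * u ω ∧ (0:ℝ) < 1 - t * u ω := by
    intro ω
    constructor
    · nlinarith [sq_nonneg (1 + t * u ω), hulto ω]
    · nlinarith [sq_nonneg (1 - t * u ω), hulto ω]
  -- integrability
  have hg : Integrable (fun ω => 2 * Real.log (Real.cosh (X ω)) + Real.log 2) ℙ :=
    (hXint.const_mul 2).add (integrable_const _)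
  have hmeas1 : AEStronglyMeasurable (fun ω => Real.log (1 + t * u ω)) ℙ :=
    (Real.measurable_log.comp (measurable_const.add (humeas.const_mul t))).aestronglyMeasurable
  have hmeas2 : AEStronglyMeasurable (fun ω => Real.log (1 - t * u ω)) ℙ :=
    (Real.measurable_log.comp (measurable_const.sub (humeas.const_mul t))).aestronglyMeasurable
  have hint1 : Integrable (fun ω => Real.log (1 + t * u ω)) ℙ := by
    refine hg.mono' hmeas1 (Filter.Eventually.of_forall fun ω => ?_)
    simpa [Real.norm_eq_abs] using abs_log_one_add_le' (x := X ω) (hasq ω)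
  have hint2 : Integrable (fun ω => Real.log (1 - t * u ω)) ℙ := by
    refine hg.mono' hmeas2 (Filter.Eventually.of_forall fun ω => ?_)
    have := abs_log_one_add_le' (x := X ω) (a := -(t * u ω)) (by rw [neg_pow]; simpa using hasq ω)
    simpa [Real.norm_eq_abs, sub_eq_add_neg] using this
  -- symmetry
  have hfmeas : Measurable (fun x : ℝ => Real.log (1 + t * Real.tanh x)) :=
    Real.measurable_log.comp (measurable_const.add (measurable_tanh'.const_mul t))
  have hsymm : ∫ ω, Real.log (1 + t * u ω) ∂ℙ = ∫ ω, Real.log (1 - t * u ω) ∂ℙ := by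
    have h1 : ∫ ω, Real.log (1 + t * u ω) ∂ℙ
        = ∫ x, Real.log (1 + t * Real.tanh x) ∂(Measure.map X ℙ) :=
      (integral_map hXmeas.aemeasurable hfmeas.aestronglyMeasurable).symm
    have h2 : ∫ x, Real.log (1 + t * Real.tanh x) ∂(Measure.map (fun ω => -X ω) ℙ)
        = ∫ ω, Real.log (1 + t * Real.tanh (-X ω)) ∂ℙ :=
      integral_map hXmeas.neg.aemeasurable hfmeas.aestronglyMeasurable
    rw [h1, hXsymm, h2]
    simp [hu, Real.tanh_neg, mul_neg, sub_eq_add_neg]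
  -- the series
  set F : ℕ → Ω → ℝ := fun n ω => ((t * u ω) ^ 2) ^ (n + 1) / ((n : ℝ) + 1) with hF
  have hHasSum : ∀ ω, HasSum (fun n => F n ω) (-Real.log (1 - (t * u ω) ^ 2)) := by
    intro ω
    have habs : |(t * u ω) ^ 2| < 1 := by
      rw [abs_of_nonneg (sq_nonneg _)]; exact hulto ω
    exact Real.hasSum_pow_div_log_of_abs_lt_one habs
  have hFmeas : ∀ n, Measurable (F n) := fun n =>
    (((humeas.const_mul t).pow_const 2).pow_const (n + 1)).div_const _
  have hFnonneg : ∀ n ω, 0 ≤ F n ω := by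
    intro n ω
    apply div_nonneg (pow_nonneg (sq_nonneg _) _)
    positivity
  have hlint : (∑' n, ∫⁻ ω, ‖F n ω‖₊ ∂ℙ) ≠ ⊤ := by
    rw [← lintegral_tsum (f := fun n ω => (‖F n ω‖₊ : ENNReal))
      (fun n => (hFmeas n).nnnorm.coe_nnreal_ennreal.aemeasurable)]
    have hkey : ∀ ω, (∑' n, (‖F n ω‖₊ : ENNReal))
        ≤ ENNReal.ofReal (2 * Real.log (Real.cosh (X ω))) := by
      intro ω
      have he : (∑' n, (‖F n ω‖₊ : ENNReal))
          = ENNReal.ofReal (-Real.log (1 - (t * u ω) ^ 2)) := by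
        rw [← (hHasSum ω).tsum_eq,
          ENNReal.ofReal_tsum_of_nonneg (fun n => hFnonneg n ω) (hHasSum ω).summable]
        exact tsum_congr fun n => (Real.enorm_eq_ofReal (hFnonneg n ω))
      rw [he]
      apply ENNReal.ofReal_le_ofReal
      have htpos : (0:ℝ) < 1 - u ω ^ 2 := by linarith [tanh_sq_lt_one' (X ω)]
      have h1 : Real.log (1 - u ω ^ 2) ≤ Real.log (1 - (t * u ω) ^ 2) :=
        Real.log_le_log htpos (by linarith [hasq ω])
      rw [show (1:ℝ) - u ω ^ 2 = 1 - Real.tanh (X ω) ^ 2 from rfl,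
        log_one_sub_tanh_sq' (X ω)] at h1
      linarith
    refine ne_of_lt (lt_of_le_of_lt (lintegral_mono hkey) ?_)
    calc ∫⁻ ω, ENNReal.ofReal (2 * Real.log (Real.cosh (X ω))) ∂ℙ
        ≤ ∫⁻ ω, (‖2 * Real.log (Real.cosh (X ω))‖₊ : ENNReal) ∂ℙ :=
          lintegral_mono fun ω => Real.ofReal_le_enorm _
      _ < ⊤ := (hXint.const_mul 2).hasFiniteIntegral
  have hexch : ∫ ω, -Real.log (1 - (t * u ω) ^ 2) ∂ℙ = ∑' n, ∫ ω, F n ω ∂ℙ := by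
    rw [← integral_tsum (fun n => (hFmeas n).aestronglyMeasurable) hlint]
    congr 1
    funext ω
    exact ((hHasSum ω).tsum_eq).symm
  -- value of each integral
  have hFval : ∀ n, ∫ ω, F n ω ∂ℙ
      = 2 * (t ^ (2 * (n + 1)) / (2 * (n + 1) : ℝ) * ∫ ω, Real.tanh (X ω) ^ (2 * (n + 1)) ∂ℙ) := by
    intro n
    have hrw : (fun ω => F n ω)
        = fun ω => (t ^ (2 * (n + 1)) / ((n : ℝ) + 1)) * Real.tanh (X ω) ^ (2 * (n + 1)) := by
      funext ω
      show ((t * u ω) ^ 2) ^ (n + 1) / ((n : ℝ) + 1) = _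
      rw [← pow_mul, mul_pow]
      ring
    rw [hrw, integral_const_mul]
    have hc : ((n : ℝ) + 1) ≠ 0 := by positivity
    field_simp
  have hsumF : Summable (fun n => ∫ ω, F n ω ∂ℙ) := by
    have heq : ∀ n, ∫ ω, F n ω ∂ℙ = (∫⁻ ω, (‖F n ω‖₊ : ENNReal) ∂ℙ).toReal := by
      intro n
      rw [integral_eq_lintegral_of_nonneg_ae (Filter.Eventually.of_forall (hFnonneg n))
        (hFmeas n).aestronglyMeasurable]
      congr 1
      exact lintegral_congr fun ω => (Real.enorm_eq_ofReal (hFnonneg n ω)).symm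
    simp_rw [heq]
    exact ENNReal.summable_toReal hlint
  have hsumA : Summable (fun n : ℕ =>
      t ^ (2 * (n + 1)) / (2 * (n + 1) : ℝ) * ∫ ω, Real.tanh (X ω) ^ (2 * (n + 1)) ∂ℙ) := by
    refine (hsumF.div_const 2).congr fun n => ?_
    rw [hFval n]
    ring
  refine ⟨hint1, hsumA, ?_⟩
  have hadd : ∫ ω, Real.log (1 + t * u ω) ∂ℙ + ∫ ω, Real.log (1 - t * u ω) ∂ℙ
      = ∫ ω, Real.log (1 - (t * u ω) ^ 2) ∂ℙ := by
    rw [← integral_add hint1 hint2]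
    congr 1
    funext ω
    rw [show (1:ℝ) - (t * u ω) ^ 2 = (1 + t * u ω) * (1 - t * u ω) by ring,
      Real.log_mul (hpos ω).1.ne' (hpos ω).2.ne']
  have hneg : ∫ ω, Real.log (1 - (t * u ω) ^ 2) ∂ℙ = -∑' n, ∫ ω, F n ω ∂ℙ := by
    rw [← hexch, integral_neg, neg_neg]
  have htsum : ∑' n, ∫ ω, F n ω ∂ℙ
      = 2 * ∑' n : ℕ, t ^ (2 * (n + 1)) / (2 * (n + 1) : ℝ)
          * ∫ ω, Real.tanh (X ω) ^ (2 * (n + 1)) ∂ℙ := by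
    rw [← tsum_mul_left]
    exact tsum_congr hFval
  have hI := hsymm
  have : (2:ℝ) * ∫ ω, Real.log (1 + t * u ω) ∂ℙ
      = -(2 * ∑' n : ℕ, t ^ (2 * (n + 1)) / (2 * (n + 1) : ℝ)
          * ∫ ω, Real.tanh (X ω) ^ (2 * (n + 1)) ∂ℙ) := by
    rw [two_mul]
    calc ∫ ω, Real.log (1 + t * u ω) ∂ℙ + ∫ ω, Real.log (1 + t * u ω) ∂ℙ
        = ∫ ω, Real.log (1 + t * u ω) ∂ℙ + ∫ ω, Real.log (1 - t * u ω) ∂ℙ := by rw [hI]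
      _ = ∫ ω, Real.log (1 - (t * u ω) ^ 2) ∂ℙ := hadd
      _ = -∑' n, ∫ ω, F n ω ∂ℙ := hneg
      _ = _ := by rw [htsum]
  linarith
end

section
/- Let f : ℕ → ℝ satisfy |f(m)| ≤ C·(1+m)^d for all m and some constants C ≥ 0, d ∈ ℕ. Then the function λ ↦ E[f(P_λ)] = ∑_{m=0}^∞ e^{−λ} λ^m/m! · f(m) is differentiable on (0,∞), with derivative E[f(P_λ + 1)] − E[f(P_λ)] = ∑_{m=0}^∞ e^{−λ} λ^m/m! · (f(m+1) − f(m)). -/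
open Filter

lemma aux_summable (k : ℕ) (b : ℝ) (hb : 1 ≤ b) :
    Summable (fun n : ℕ => (1 + n : ℝ) ^ k * b ^ n / (Nat.factorial n)) := by
  have hb0 : (0:ℝ) < b := lt_of_lt_of_le one_pos hb
  apply summable_of_ratio_norm_eventually_le (r := 1/2) (by norm_num)
  filter_upwards [eventually_ge_atTop ⌈2 ^ (k+1) * b⌉₊] with n hn
  have hfac : ((Nat.factorial (n+1) : ℝ)) = (n+1) * Nat.factorial n := by
    push_cast [Nat.factorial_succ]; ring
  have hfn : (0:ℝ) < Nat.factorial n := by positivity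
  have hn1 : (2:ℝ) ^ (k+1) * b ≤ n + 1 := by
    calc (2:ℝ) ^ (k+1) * b ≤ ⌈2 ^ (k+1) * b⌉₊ := Nat.le_ceil _
    _ ≤ n := by exact_mod_cast hn
    _ ≤ n + 1 := by linarith
  have h2k : ((1 + (n+1) : ℕ) : ℝ) ^ k ≤ 2 ^ k * (1 + n) ^ k := by
    rw [← mul_pow]
    apply pow_le_pow_left₀ (by positivity)
    push_cast; linarith
  have key : (2:ℝ)^k * b / (n+1) ≤ 1/2 := by
    rw [div_le_iff₀ (by positivity)]
    have : (2:ℝ)^(k+1) = 2 * 2^k := by ring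
    nlinarith [pow_pos (show (0:ℝ) < 2 by norm_num) k]
  rw [Real.norm_eq_abs, Real.norm_eq_abs, abs_of_nonneg (by positivity),
    abs_of_nonneg (by positivity)]
  calc (1 + ((n+1:ℕ)):ℝ) ^ k * b ^ (n+1) / (Nat.factorial (n+1))
      = ((1 + (n+1) : ℕ) : ℝ) ^ k * (b * b ^ n) / ((n+1) * Nat.factorial n) := by
        rw [hfac]; push_cast; ring_nf
    _ ≤ (2 ^ k * (1 + n) ^ k) * (b * b ^ n) / ((n+1) * Nat.factorial n) := by
        gcongr
    _ = (2^k * b / (n+1)) * ((1 + n) ^ k * b ^ n / Nat.factorial n) := by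
        field_simp
    _ ≤ (1/2) * ((1 + n) ^ k * b ^ n / Nat.factorial n) := by
        apply mul_le_mul_of_nonneg_right key (by positivity)

/-- If `f : ℕ → ℝ` has polynomial growth `|f(m)| ≤ C(1+m)^d`, then
`λ ↦ E[f(P_λ)] = ∑_m e^{−λ} λ^m/m! · f(m)` is differentiable on `(0,∞)` with derivative
`E[f(P_λ+1)] − E[f(P_λ)] = ∑_m e^{−λ} λ^m/m! · (f(m+1) − f(m))`. -/
theorem poisson_expectation_hasDerivAt (f : ℕ → ℝ) (C : ℝ) (hC : 0 ≤ C) (d : ℕ)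
    (hf : ∀ m : ℕ, |f m| ≤ C * (1 + m : ℝ) ^ d) :
    ∀ lam ∈ Set.Ioi (0 : ℝ),
      HasDerivAt
        (fun l : ℝ => ∑' m : ℕ, Real.exp (-l) * l ^ m / (Nat.factorial m) * f m)
        (∑' m : ℕ, Real.exp (-lam) * lam ^ m / (Nat.factorial m) * (f (m + 1) - f m))
        lam := by
  intro lam hlam
  have hlam0 : (0:ℝ) < lam := hlam
  set b : ℝ := lam + 1 with hbdef
  have hb1 : (1:ℝ) ≤ b := by simp only [hbdef]; linarith
  have hb0 : (0:ℝ) < b := by linarith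
  set u : ℕ → ℝ := fun n => C * ((1 + n : ℝ) ^ (d+1) * b ^ n / (Nat.factorial n)) with hudef
  have hu : Summable u := (aux_summable (d+1) b hb1).mul_left C
  set g : ℕ → ℝ → ℝ := fun n l => Real.exp (-l) * l ^ n / (Nat.factorial n) * f n with hgdef
  set g' : ℕ → ℝ → ℝ := fun n l =>
    (Real.exp (-l) * ((n:ℝ) * l ^ (n-1)) - Real.exp (-l) * l ^ n) / (Nat.factorial n) * f n
    with hg'def
  -- derivative of each term
  have hderiv : ∀ n : ℕ, ∀ y : ℝ, HasDerivAt (g n) (g' n y) y := by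
    intro n y
    have h1 : HasDerivAt (fun l : ℝ => Real.exp (-l)) (-Real.exp (-y)) y := by
      simpa using (hasDerivAt_neg y).exp
    have h2 : HasDerivAt (fun l : ℝ => l ^ n) ((n:ℝ) * y ^ (n-1)) y := hasDerivAt_pow n y
    have h3 := ((h1.mul h2).div_const (Nat.factorial n)).mul_const (f n)
    refine h3.congr_deriv ?_
    simp only [hg'def]; ring
  -- norm bounds on the derivatives
  have hbound : ∀ n : ℕ, ∀ y : ℝ, y ∈ Set.Ioo (0:ℝ) b → ‖g' n y‖ ≤ u n := by
    intro n y hy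
    have hy0 : 0 < y := hy.1
    have hyb : y ≤ b := le_of_lt hy.2
    have he : Real.exp (-y) ≤ 1 := Real.exp_le_one_iff.mpr (by linarith)
    have he0 : 0 < Real.exp (-y) := Real.exp_pos _
    have hfn : (0:ℝ) < Nat.factorial n := by positivity
    have hpow : y ^ n ≤ b ^ n := pow_le_pow_left₀ (le_of_lt hy0) hyb n
    have hpow1 : (n:ℝ) * y ^ (n-1) ≤ (n:ℝ) * b ^ n := by
      rcases Nat.eq_zero_or_pos n with h | h
      · simp [h]
      · have : y ^ (n-1) ≤ b ^ n := le_trans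
          (pow_le_pow_left₀ (le_of_lt hy0) hyb (n-1))
          (pow_le_pow_right₀ hb1 (Nat.sub_le n 1))
        exact mul_le_mul_of_nonneg_left this (by positivity)
    have habs : |f n| ≤ C * (1 + n : ℝ) ^ d := hf n
    calc ‖g' n y‖ = Real.exp (-y) * |(n:ℝ) * y ^ (n-1) - y ^ n| / (Nat.factorial n) * |f n| := by
          simp only [hg'def, Real.norm_eq_abs, abs_mul, abs_div, abs_of_pos hfn]
          rw [← mul_sub, abs_mul, abs_of_pos he0]
      _ ≤ 1 * ((n:ℝ) * y ^ (n-1) + y ^ n) / (Nat.factorial n) * (C * (1 + n : ℝ) ^ d) := by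
          gcongr
          · refine le_trans (abs_sub _ _) ?_
            rw [abs_of_nonneg (by positivity), abs_of_nonneg (by positivity)]
      _ ≤ 1 * ((n:ℝ) * b ^ n + b ^ n) / (Nat.factorial n) * (C * (1 + n : ℝ) ^ d) := by
          gcongr
      _ = C * ((1 + n : ℝ) ^ d * (1 + n) * b ^ n / (Nat.factorial n)) := by
          field_simp; ring
      _ = u n := by
          simp only [hudef]; rw [← pow_succ]
  -- summability at lam
  have hglam : ∀ n : ℕ, ‖g n lam‖ ≤ u n := by
    intro n
    have he : Real.exp (-lam) ≤ 1 := Real.exp_le_one_iff.mpr (by linarith)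
    have hfn : (0:ℝ) < Nat.factorial n := by positivity
    have hpow : lam ^ n ≤ b ^ n := pow_le_pow_left₀ (le_of_lt hlam0) (by linarith) n
    have h1n : ((1:ℝ) + n) ^ d ≤ ((1:ℝ) + n) ^ (d+1) :=
      pow_le_pow_right₀ (by have : (0:ℝ) ≤ n := n.cast_nonneg; linarith) (Nat.le_succ d)
    calc ‖g n lam‖ = Real.exp (-lam) * lam ^ n / (Nat.factorial n) * |f n| := by
          simp only [hgdef, Real.norm_eq_abs, abs_mul, abs_div, abs_of_pos hfn,
            abs_of_pos (Real.exp_pos _), abs_of_nonneg (le_of_lt (pow_pos hlam0 n))]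
      _ ≤ 1 * b ^ n / (Nat.factorial n) * (C * (1 + n : ℝ) ^ d) := by
          gcongr; exact hf n
      _ ≤ 1 * b ^ n / (Nat.factorial n) * (C * (1 + n : ℝ) ^ (d+1)) := by gcongr
      _ = u n := by simp only [hudef]; field_simp
  have hsum0 : Summable (fun n => g n lam) := Summable.of_norm_bounded hu hglam
  have hmem : lam ∈ Set.Ioo (0:ℝ) b := ⟨hlam0, by simp [hbdef]⟩
  have H := hasDerivAt_tsum_of_isPreconnected hu isOpen_Ioo (convex_Ioo (0:ℝ) b).isPreconnected
    (fun n y _ => hderiv n y) (fun n y hy => hbound n y hy) hmem hsum0 hmem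
  -- rewrite the derivative value
  set A : ℕ → ℝ := fun n => Real.exp (-lam) * ((n:ℝ) * lam ^ (n-1)) / (Nat.factorial n) * f n
    with hAdef
  set B : ℕ → ℝ := fun n => Real.exp (-lam) * lam ^ n / (Nat.factorial n) * f n with hBdef
  have hBsum : Summable B := hsum0
  have hg'AB : ∀ n, g' n lam = A n - B n := by
    intro n; simp only [hg'def, hAdef, hBdef]; ring
  have hAnorm : ∀ n, ‖A n‖ ≤ u n + u n := by
    intro n
    have h1 := hbound n lam hmem
    have h2 := hglam n
    have heq : A n = g' n lam + g n lam := by simp only [hg'def, hAdef, hgdef]; ring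
    calc ‖A n‖ ≤ ‖g' n lam‖ + ‖g n lam‖ := by rw [heq]; exact norm_add_le _ _
      _ ≤ u n + u n := add_le_add h1 h2
  have hAsum : Summable A := Summable.of_norm_bounded (hu.add hu) hAnorm
  have hA0 : A 0 = 0 := by simp [hAdef]
  have hAshift : ∀ n : ℕ, A (n+1) = Real.exp (-lam) * lam ^ n / (Nat.factorial n) * f (n+1) := by
    intro n
    simp only [hAdef]
    have : ((Nat.factorial (n+1) : ℝ)) = (n+1) * Nat.factorial n := by
      push_cast [Nat.factorial_succ]; ring
    rw [this]
    have hfn : (0:ℝ) < Nat.factorial n := by positivity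
    field_simp
    rw [Nat.add_sub_cancel]; push_cast
    ring
  have hAshiftSum : Summable (fun n => A (n+1)) := by
    rw [← summable_nat_add_iff 1] at hAsum; exact hAsum
  have htsumA : ∑' n, A n = ∑' n, A (n+1) := by
    rw [hAsum.tsum_eq_zero_add, hA0, zero_add]
  have hfinal : ∑' n, g' n lam
      = ∑' m : ℕ, Real.exp (-lam) * lam ^ m / (Nat.factorial m) * (f (m + 1) - f m) := by
    have h1 : ∑' n, g' n lam = (∑' n, A n) - ∑' n, B n := by
      simp_rw [hg'AB]; exact hAsum.tsum_sub hBsum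
    have h2 : ∀ m : ℕ, Real.exp (-lam) * lam ^ m / (Nat.factorial m) * (f (m + 1) - f m)
        = A (m+1) - B m := by
      intro m; rw [hAshift m]; simp only [hBdef]; ring
    rw [h1, htsumA]
    rw [show (fun m : ℕ => Real.exp (-lam) * lam ^ m / (Nat.factorial m) * (f (m + 1) - f m))
        = fun m => A (m+1) - B m from funext h2]
    exact (hAshiftSum.tsum_sub hBsum).symm
  rw [← hfinal]
  exact H
end

section
/- Let β > 0, let n ≥ 1 be an integer, and let J be a real random variable with symmetric distribution and 0 < E[J²] < ∞. For α ≥ 0 let M_α be Poisson with mean 2α, independent of i.i.d. copies (J_ν)_{ν≥1} of J, and set q̃_{2n}(α) := E[tanh^{2n}(β ∑_{ν=1}^{M_α} J_ν)]. Then q̃_{2n} is continuous on [0,∞), q̃_{2n}(0) = 0, and lim_{α→∞} q̃_{2n}(α) = 1; consequently, for every x ∈ [0,1) there exists α ≥ 0 with q̃_{2n}(α) = x. -/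
open MeasureTheory ProbabilityTheory Filter

/-- The Poisson probability weight `e^{−λ} λ^m / m!`. -/
noncomputable def poissonWeight (l : ℝ) (m : ℕ) : ℝ :=
  Real.exp (-l) * l ^ m / (Nat.factorial m)


open Real

noncomputable def Kker (u x : ℝ) : ℝ := if x = 0 then u/2 else (1 - Real.cos (u*x))/(u*x^2)

-- tanh facts
lemma mytanh_eq (x : ℝ) : Real.tanh x = 1 - 2 / (Real.exp (2*x) + 1) := by
  rw [Real.tanh_eq_sinh_div_cosh, Real.sinh_eq, Real.cosh_eq]
  have h1 : Real.exp x ≠ 0 := (Real.exp_pos x).ne'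
  have h2 : Real.exp (2*x) + 1 > 0 := by positivity
  have h3 : Real.exp (-x) = (Real.exp x)⁻¹ := Real.exp_neg x
  have h4 : Real.exp (2*x) = Real.exp x * Real.exp x := by rw [← Real.exp_add]; ring_nf
  have h5 : 0 < Real.exp x + Real.exp (-x) := by positivity
  rw [h4] at h2 ⊢
  rw [h3] at h5 ⊢
  field_simp
  ring

lemma mytanh_lt_one (x : ℝ) : Real.tanh x < 1 := by
  rw [mytanh_eq]; have : 0 < 2 / (Real.exp (2*x) + 1) := by positivity
  linarith

lemma mytanh_nonneg {x : ℝ} (hx : 0 ≤ x) : 0 ≤ Real.tanh x := by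
  rw [mytanh_eq]
  have h1 : Real.exp (2*x) + 1 ≥ 2 := by nlinarith [Real.one_le_exp (by linarith : (0:ℝ) ≤ 2*x)]
  have : 2 / (Real.exp (2*x) + 1) ≤ 1 := by
    rw [div_le_one (by linarith)]; linarith
  linarith

lemma mytanh_mono : Monotone Real.tanh := by
  intro x y hxy
  rw [mytanh_eq, mytanh_eq]
  have h1 : Real.exp (2*x) ≤ Real.exp (2*y) := Real.exp_le_exp.2 (by linarith)
  have h2 : (0:ℝ) < Real.exp (2*x) + 1 := by positivity
  have h3 : (0:ℝ) < Real.exp (2*y) + 1 := by positivity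
  have h4 : 2 / (Real.exp (2*y) + 1) ≤ 2 / (Real.exp (2*x) + 1) :=
    div_le_div_of_nonneg_left (by norm_num) h2 (by linarith)
  linarith

lemma mytanh_sq_le_one (x : ℝ) : Real.tanh x ^ 2 ≤ 1 := by
  rcases le_or_gt 0 x with h | h
  · nlinarith [mytanh_lt_one x, mytanh_nonneg h]
  · have h1 := mytanh_lt_one (-x)
    rw [Real.tanh_neg] at h1
    have h2 := mytanh_nonneg (by linarith : (0:ℝ) ≤ -x)
    rw [Real.tanh_neg] at h2
    nlinarith

lemma mytanh_tendsto : Tendsto Real.tanh atTop (nhds 1) := by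
  have : Tendsto (fun x : ℝ => 1 - 2 / (Real.exp (2*x) + 1)) atTop (nhds (1 - 0)) := by
    apply Tendsto.const_sub
    apply Tendsto.div_atTop tendsto_const_nhds
    apply Filter.Tendsto.atTop_add _ tendsto_const_nhds
    exact (Real.tendsto_exp_atTop).comp (tendsto_id.const_mul_atTop (by norm_num))
  simpa [mytanh_eq] using this.congr (fun x => (mytanh_eq x).symm)


lemma Kker_nonneg {u : ℝ} (hu : 0 < u) (x : ℝ) : 0 ≤ Kker u x := by
  unfold Kker
  split
  · positivity
  · apply div_nonneg _ (by positivity)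
    linarith [Real.cos_le_one (u*x)]

lemma Kker_le {u : ℝ} (hu : 0 < u) (x : ℝ) : Kker u x ≤ u/2 := by
  unfold Kker
  split
  · exact le_refl _
  · rename_i hx
    rw [div_le_iff₀ (by positivity)]
    have h1 : 1 - (u*x)^2/2 ≤ Real.cos (u*x) := Real.one_sub_sq_div_two_le_cos
    nlinarith [sq_nonneg (u*x)]

lemma Kker_ge {u : ℝ} (hu : 0 < u) {x : ℝ} (hx : |x| ≤ 1/u) : 2/π^2 * u ≤ Kker u x := by
  have hpi : (2:ℝ) < π ^ 2 := by nlinarith [Real.pi_gt_three]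
  unfold Kker
  split
  · have h2 : 2 / π^2 ≤ 1/2 := by
      rw [div_le_div_iff₀ (by positivity) (by norm_num)]
      nlinarith [Real.pi_gt_three]
    calc 2/π^2 * u ≤ 1/2 * u := by nlinarith
      _ = u/2 := by ring
  · rename_i hxne
    have hux : |u*x| ≤ 1 := by
      rw [abs_mul, abs_of_pos hu]
      calc u * |x| ≤ u * (1/u) := by nlinarith [abs_nonneg x]
        _ = 1 := by field_simp
    have h1 : Real.cos (u*x) ≤ 1 - 2/π^2 * (u*x)^2 :=
      Real.cos_le_one_sub_mul_cos_sq (le_trans hux (by nlinarith [Real.pi_gt_three]))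
    rw [le_div_iff₀ (by positivity)]
    have hx2 : (0:ℝ) < x^2 := by positivity
    nlinarith

lemma measurable_Kker (u : ℝ) : Measurable (Kker u) := by
  unfold Kker
  apply Measurable.ite (measurableSet_eq) measurable_const
  fun_prop

lemma one_sub_pow_le_n {x : ℝ} (hx0 : 0 ≤ x) (hx1 : x ≤ 1) (n : ℕ) : 1 - x^n ≤ n * (1-x) := by
  induction n with
  | zero => simp
  | succ k ih =>
    have hxk : x ^ k ≤ 1 := pow_le_one₀ hx0 hx1
    have : 1 - x^(k+1) = (1-x) + x*(1 - x^k) := by ring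
    rw [this]
    push_cast
    nlinarith


lemma integral_triangle_cos (u x : ℝ) (hu : 0 < u) :
    ∫ t in (0:ℝ)..u, (1 - t/u) * Real.cos (t*x) = Kker u x := by
  rcases eq_or_ne x 0 with rfl | hx
  · simp only [Kker, if_pos rfl, mul_zero, Real.cos_zero, mul_one, ↓reduceIte]
    rw [intervalIntegral.integral_sub intervalIntegrable_const
        (((by fun_prop : Continuous fun t : ℝ => t/u)).intervalIntegrable 0 u)]
    have h1 : ∫ t in (0:ℝ)..u, (t/u) = (∫ t in (0:ℝ)..u, t) / u := by
      simp [intervalIntegral.integral_div]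
    rw [h1, integral_id, intervalIntegral.integral_const]
    field_simp; ring
  · simp only [Kker, if_neg hx]
    set G : ℝ → ℝ := fun t => Real.sin (t*x)/x - (t*Real.sin (t*x))/(u*x) - Real.cos (t*x)/(u*x^2) with hG
    have hderiv : ∀ t : ℝ, HasDerivAt G ((1 - t/u) * Real.cos (t*x)) t := by
      intro t
      have hs : HasDerivAt (fun t : ℝ => Real.sin (t*x)) (Real.cos (t*x) * x) t :=
        HasDerivAt.comp (h₂ := Real.sin) t (Real.hasDerivAt_sin (t*x)) (hasDerivAt_mul_const x)
      have hc : HasDerivAt (fun t : ℝ => Real.cos (t*x)) (-Real.sin (t*x) * x) t :=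
        HasDerivAt.comp (h₂ := Real.cos) t (Real.hasDerivAt_cos (t*x)) (hasDerivAt_mul_const x)
      have hts : HasDerivAt (fun t : ℝ => t * Real.sin (t*x))
          (1 * Real.sin (t*x) + t * (Real.cos (t*x) * x)) t := (hasDerivAt_id t).mul hs
      have := ((hs.div_const x).sub (hts.div_const (u*x))).sub (hc.div_const (u*x^2))
      refine this.congr_deriv ?_
      field_simp
      ring
    rw [intervalIntegral.integral_eq_sub_of_hasDerivAt (fun t _ => hderiv t)
        (((continuous_const.sub (continuous_id.div_const u)).mul
          ((Real.continuous_cos.comp (continuous_id.mul continuous_const)))).intervalIntegrable 0 u)]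
    simp only [hG, zero_mul, Real.sin_zero, Real.cos_zero, mul_zero]
    field_simp
    ring

lemma poissonWeight_hasSum (l : ℝ) : HasSum (poissonWeight l) 1 := by
  have h := NormedSpace.expSeries_div_hasSum_exp l
  have h2 : HasSum (fun n => Real.exp (-l) * (l^n / n.factorial)) (Real.exp (-l) * NormedSpace.exp l) :=
    h.mul_left _
  have h3 : Real.exp (-l) * NormedSpace.exp l = 1 := by
    rw [← Real.exp_eq_exp_ℝ, ← Real.exp_add]
    simp
  rw [h3] at h2
  apply h2.congr_fun
  intro m
  rw [poissonWeight, mul_div_assoc]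

lemma poissonWeight_nonneg {l : ℝ} (hl : 0 ≤ l) (m : ℕ) : 0 ≤ poissonWeight l m := by
  rw [poissonWeight]
  positivity

lemma poissonWeight_continuous (m : ℕ) : Continuous (fun α : ℝ => poissonWeight (2*α) m) := by
  unfold poissonWeight
  fun_prop

lemma poissonWeight_tendsto_zero (m : ℕ) :
    Tendsto (fun α : ℝ => poissonWeight (2*α) m) atTop (nhds 0) := by
  have h1 : Tendsto (fun α : ℝ => 2*α) atTop atTop :=
    tendsto_id.const_mul_atTop (by norm_num)
  have h2 := (Real.tendsto_pow_mul_exp_neg_atTop_nhds_zero m).comp h1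
  have h3 : Tendsto (fun α : ℝ => ((2*α)^m * Real.exp (-(2*α))) / m.factorial) atTop (nhds (0 / m.factorial)) :=
    h2.div_const _
  rw [zero_div] at h3
  apply h3.congr
  intro α
  rw [poissonWeight]
  ring

section ProbAux
variable {Ω : Type} [MeasureSpace Ω] [IsProbabilityMeasure (ℙ : Measure Ω)]


lemma integrable_of_bound {f : Ω → ℝ} (hm : AEStronglyMeasurable f ℙ) (C : ℝ)
    (h : ∀ ω, ‖f ω‖ ≤ C) : Integrable f ℙ :=
  Integrable.mono' (integrable_const C) hm (Filter.Eventually.of_forall h)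

lemma sin_int_zero (J0 : Ω → ℝ) (hm : Measurable J0)
    (hsymm : Measure.map J0 ℙ = Measure.map (fun ω => -J0 ω) ℙ) (t : ℝ) :
    ∫ ω, Real.sin (t * J0 ω) ∂ℙ = 0 := by
  have hms : Measurable (fun x : ℝ => Real.sin (t * x)) :=
    Real.measurable_sin.comp (measurable_id.const_mul t)
  have h1 : ∫ ω, Real.sin (t * J0 ω) ∂ℙ = ∫ x, Real.sin (t * x) ∂(Measure.map J0 ℙ) :=
    (integral_map hm.aemeasurable hms.aestronglyMeasurable).symm
  have h2 : ∫ x, Real.sin (t * x) ∂(Measure.map (fun ω => -J0 ω) ℙ)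
      = ∫ ω, Real.sin (t * (-J0 ω)) ∂ℙ :=
    integral_map (hm.neg).aemeasurable hms.aestronglyMeasurable
  have h3 : ∀ ω, Real.sin (t * (-J0 ω)) = - Real.sin (t * J0 ω) := by
    intro ω; rw [mul_neg, Real.sin_neg]
  have h4 : ∫ ω, Real.sin (t * (-J0 ω)) ∂ℙ = - ∫ ω, Real.sin (t * J0 ω) ∂ℙ := by
    simp only [mul_neg, Real.sin_neg, integral_neg]
  have h5 : ∫ (x : ℝ), Real.sin (t * x) ∂Measure.map J0 ℙ
      = ∫ (x : ℝ), Real.sin (t*x) ∂Measure.map (fun ω => -J0 ω) ℙ := by rw [hsymm]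
  linarith [h1, h2, h4, h5]

lemma cos_int_ident (J : ℕ → Ω → ℝ) (hJmeas : ∀ ν, Measurable (J ν))
    (hJid : ∀ ν, IdentDistrib (J ν) (J 0) ℙ ℙ) (t : ℝ) (ν : ℕ) :
    ∫ ω, Real.cos (t * J ν ω) ∂ℙ = ∫ ω, Real.cos (t * J 0 ω) ∂ℙ := by
  have hmc : Measurable (fun x : ℝ => Real.cos (t * x)) :=
    Real.measurable_cos.comp (measurable_id.const_mul t)
  exact ((hJid ν).comp hmc).integral_eq

lemma sin_int_ident_zero (J : ℕ → Ω → ℝ) (hJmeas : ∀ ν, Measurable (J ν))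
    (hJid : ∀ ν, IdentDistrib (J ν) (J 0) ℙ ℙ)
    (hsymm : Measure.map (J 0) ℙ = Measure.map (fun ω => -J 0 ω) ℙ) (t : ℝ) (ν : ℕ) :
    ∫ ω, Real.sin (t * J ν ω) ∂ℙ = 0 := by
  have hms : Measurable (fun x : ℝ => Real.sin (t * x)) :=
    Real.measurable_sin.comp (measurable_id.const_mul t)
  have h := ((hJid ν).comp hms).integral_eq
  simp only [Function.comp] at h
  rw [h]
  exact sin_int_zero (J 0) (hJmeas 0) hsymm t

lemma charfun_sum (J : ℕ → Ω → ℝ) (hJmeas : ∀ ν, Measurable (J ν))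
    (hJindep : iIndepFun J ℙ)
    (hJid : ∀ ν, IdentDistrib (J ν) (J 0) ℙ ℙ)
    (hsymm : Measure.map (J 0) ℙ = Measure.map (fun ω => -J 0 ω) ℙ) (t : ℝ) (m : ℕ) :
    ∫ ω, Real.cos (t * ∑ ν ∈ Finset.range m, J ν ω) ∂ℙ
      = (∫ ω, Real.cos (t * J 0 ω) ∂ℙ) ^ m := by
  induction m with
  | zero => simp
  | succ m ih =>
    have hSmeas : Measurable (fun ω => ∑ ν ∈ Finset.range m, J ν ω) := by
      apply Finset.measurable_sum; intro i _; exact hJmeas i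
    have hmc : Measurable (fun x : ℝ => Real.cos (t * x)) :=
      Real.measurable_cos.comp (measurable_id.const_mul t)
    have hms : Measurable (fun x : ℝ => Real.sin (t * x)) :=
      Real.measurable_sin.comp (measurable_id.const_mul t)
    have hind : IndepFun (∑ ν ∈ Finset.range m, J ν) (J m) ℙ :=
      hJindep.indepFun_sum_range_succ hJmeas m
    have hsum_apply : ∀ ω, (∑ ν ∈ Finset.range m, J ν) ω = ∑ ν ∈ Finset.range m, J ν ω := by
      intro ω; simp [Finset.sum_apply]
    have hindc : IndepFun (fun ω => Real.cos (t * ∑ ν ∈ Finset.range m, J ν ω))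
        (fun ω => Real.cos (t * J m ω)) ℙ := by
      have := hind.comp hmc hmc
      convert this using 2 <;> simp [hsum_apply]
    have hinds : IndepFun (fun ω => Real.sin (t * ∑ ν ∈ Finset.range m, J ν ω))
        (fun ω => Real.sin (t * J m ω)) ℙ := by
      have := hind.comp hms hms
      convert this using 2 <;> simp [hsum_apply]
    have hintc1 : Integrable (fun ω => Real.cos (t * ∑ ν ∈ Finset.range m, J ν ω)) ℙ :=
      integrable_of_bound ((hmc.comp hSmeas).aestronglyMeasurable) 1
        (fun ω => by simpa using Real.abs_cos_le_one _)
    have hintc2 : Integrable (fun ω => Real.cos (t * J m ω)) ℙ :=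
      integrable_of_bound ((hmc.comp (hJmeas m)).aestronglyMeasurable) 1
        (fun ω => by simpa using Real.abs_cos_le_one _)
    have hints1 : Integrable (fun ω => Real.sin (t * ∑ ν ∈ Finset.range m, J ν ω)) ℙ :=
      integrable_of_bound ((hms.comp hSmeas).aestronglyMeasurable) 1
        (fun ω => by simpa using Real.abs_sin_le_one _)
    have hints2 : Integrable (fun ω => Real.sin (t * J m ω)) ℙ :=
      integrable_of_bound ((hms.comp (hJmeas m)).aestronglyMeasurable) 1
        (fun ω => by simpa using Real.abs_sin_le_one _)
    have key : ∀ ω, Real.cos (t * ∑ ν ∈ Finset.range (m+1), J ν ω)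
        = Real.cos (t * ∑ ν ∈ Finset.range m, J ν ω) * Real.cos (t * J m ω)
          - Real.sin (t * ∑ ν ∈ Finset.range m, J ν ω) * Real.sin (t * J m ω) := by
      intro ω
      rw [Finset.sum_range_succ, mul_add, Real.cos_add]
    simp only [key]
    have hintcc : Integrable (fun ω => Real.cos (t * ∑ ν ∈ Finset.range m, J ν ω)
        * Real.cos (t * J m ω)) ℙ :=
      integrable_of_bound (hintc1.aestronglyMeasurable.mul hintc2.aestronglyMeasurable) 1
        (fun ω => by
          rw [norm_mul]
          exact mul_le_one₀ (by simpa using Real.abs_cos_le_one _) (norm_nonneg _)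
            (by simpa using Real.abs_cos_le_one _))
    have hintss : Integrable (fun ω => Real.sin (t * ∑ ν ∈ Finset.range m, J ν ω)
        * Real.sin (t * J m ω)) ℙ :=
      integrable_of_bound (hints1.aestronglyMeasurable.mul hints2.aestronglyMeasurable) 1
        (fun ω => by
          rw [norm_mul]
          exact mul_le_one₀ (by simpa using Real.abs_sin_le_one _) (norm_nonneg _)
            (by simpa using Real.abs_sin_le_one _))
    rw [integral_sub hintcc hintss]
    have hmulc : (∫ ω, Real.cos (t * ∑ ν ∈ Finset.range m, J ν ω) * Real.cos (t * J m ω) ∂ℙ)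
        = (∫ ω, Real.cos (t * ∑ ν ∈ Finset.range m, J ν ω) ∂ℙ) * ∫ ω, Real.cos (t * J m ω) ∂ℙ :=
      hindc.integral_fun_mul_eq_mul_integral hintc1.aestronglyMeasurable hintc2.aestronglyMeasurable
    have hmuls : (∫ ω, Real.sin (t * ∑ ν ∈ Finset.range m, J ν ω) * Real.sin (t * J m ω) ∂ℙ)
        = (∫ ω, Real.sin (t * ∑ ν ∈ Finset.range m, J ν ω) ∂ℙ) * ∫ ω, Real.sin (t * J m ω) ∂ℙ :=
      hinds.integral_fun_mul_eq_mul_integral hints1.aestronglyMeasurable hints2.aestronglyMeasurable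
    rw [hmulc, hmuls]
    rw [sin_int_ident_zero J hJmeas hJid hsymm t m, cos_int_ident J hJmeas hJid t m]
    rw [ih]
    ring




lemma phi_lower (J0 : Ω → ℝ) (hm : Measurable J0)
    (hJsq : Integrable (fun ω => (J0 ω) ^ 2) ℙ) (t : ℝ) :
    1 - t^2/2 * ∫ ω, (J0 ω)^2 ∂ℙ ≤ ∫ ω, Real.cos (t * J0 ω) ∂ℙ := by
  have hmc : Measurable (fun ω => Real.cos (t * J0 ω)) :=
    Real.measurable_cos.comp (hm.const_mul t)
  have hintc : Integrable (fun ω => Real.cos (t * J0 ω)) ℙ :=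
    integrable_of_bound hmc.aestronglyMeasurable 1 (fun ω => by simpa using Real.abs_cos_le_one _)
  have hint2 : Integrable (fun ω => 1 - t^2/2 * (J0 ω)^2) ℙ :=
    (integrable_const 1).sub (hJsq.const_mul _)
  have hmono : ∀ ω, 1 - t^2/2 * (J0 ω)^2 ≤ Real.cos (t * J0 ω) := by
    intro ω
    have := Real.one_sub_sq_div_two_le_cos (x := t * J0 ω)
    nlinarith [sq_nonneg (t * J0 ω)]
  calc 1 - t^2/2 * ∫ ω, (J0 ω)^2 ∂ℙ = ∫ ω, (1 - t^2/2 * (J0 ω)^2) ∂ℙ := by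
        rw [integral_sub (integrable_const 1) (hJsq.const_mul _), integral_const_mul]
        simp
    _ ≤ ∫ ω, Real.cos (t * J0 ω) ∂ℙ := integral_mono hint2 hintc hmono

lemma phi_quadratic_bound (J0 : Ω → ℝ) (hm : Measurable J0)
    (hJsq : Integrable (fun ω => (J0 ω) ^ 2) ℙ)
    (hJpos : 0 < ∫ ω, (J0 ω) ^ 2 ∂ℙ) :
    ∃ δ > 0, ∀ t : ℝ, 0 < t → t ≤ δ →
      ∫ ω, Real.cos (t * J0 ω) ∂ℙ ≤ 1 - ((∫ ω, (J0 ω)^2 ∂ℙ)/4) * t^2 := by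
  set E2 := ∫ ω, (J0 ω)^2 ∂ℙ with hE2
  set F : ℝ → Ω → ℝ := fun t ω => (1 - Real.cos (t * J0 ω)) / t^2 with hF
  have hlim : Tendsto (fun t => ∫ ω, F t ω ∂ℙ) (nhdsWithin 0 (Set.Ioi 0)) (nhds (E2/2)) := by
    have h2 : (E2 : ℝ)/2 = ∫ ω, (J0 ω)^2/2 ∂ℙ := by rw [integral_div]
    rw [h2]
    apply tendsto_integral_filter_of_dominated_convergence (fun ω => (J0 ω)^2/2)
    · apply Filter.Eventually.of_forall
      intro t
      exact ((Real.measurable_cos.comp (hm.const_mul t)).const_sub 1 |>.div_const _).aestronglyMeasurable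
    · filter_upwards [self_mem_nhdsWithin] with t ht
      apply Filter.Eventually.of_forall
      intro ω
      have ht0 : (0:ℝ) < t := ht
      have h1 : 0 ≤ 1 - Real.cos (t * J0 ω) := by linarith [Real.cos_le_one (t * J0 ω)]
      have h2' : 1 - Real.cos (t * J0 ω) ≤ (t * J0 ω)^2/2 := by
        linarith [Real.one_sub_sq_div_two_le_cos (x := t * J0 ω)]
      rw [Real.norm_eq_abs, abs_div, abs_of_nonneg h1, abs_of_nonneg (by positivity : (0:ℝ) ≤ t^2)]
      rw [div_le_div_iff₀ (by positivity) (by norm_num)]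
      nlinarith
    · exact hJsq.div_const 2
    · apply Filter.Eventually.of_forall
      intro ω
      set y := J0 ω with hy
      have hbound : ∀ᶠ t in nhdsWithin (0:ℝ) (Set.Ioi 0),
          ‖F t ω - y^2/2‖ ≤ t^2 * (y^4 * (5/96)) := by
        have hmem : Set.Ioo (0:ℝ) (1/(|y|+1)) ∈ nhdsWithin (0:ℝ) (Set.Ioi 0) := by
          apply mem_nhdsGT_iff_exists_Ioo_subset.2
          exact ⟨1/(|y|+1), Set.mem_Ioi.2 (by positivity), subset_rfl⟩
        filter_upwards [hmem] with t ht
        have ht0 : 0 < t := ht.1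
        have hty : |t * y| ≤ 1 := by
          rw [abs_mul, abs_of_pos ht0]
          calc t * |y| ≤ (1/(|y|+1)) * (|y|+1) := by
                apply mul_le_mul ht.2.le (by linarith) (abs_nonneg y) (by positivity)
            _ = 1 := by field_simp
        have hcb := Real.cos_bound hty
        have heq : F t ω - y^2/2 = -((Real.cos (t*y) - (1 - (t*y)^2/2)) / t^2) := by
          rw [hF]
          field_simp
          ring
        rw [heq, norm_neg, Real.norm_eq_abs, abs_div, abs_of_nonneg (by positivity : (0:ℝ) ≤ t^2)]
        rw [div_le_iff₀ (by positivity)]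
        calc |Real.cos (t*y) - (1 - (t*y)^2/2)| ≤ |t*y|^4 * (5/96) := hcb
          _ ≤ t^2 * (y^4 * (5/96)) * t^2 := by
            have : |t*y|^4 = t^4 * y^4 := by
              rw [abs_mul, mul_pow, ← abs_pow, ← abs_pow, abs_of_nonneg (by positivity : (0:ℝ) ≤ t^4),
                abs_of_nonneg (by positivity : (0:ℝ) ≤ y^4)]
            rw [this]
            ring_nf
            exact le_refl _
      have hgto : Tendsto (fun t : ℝ => t^2 * (y^4 * (5/96))) (nhdsWithin 0 (Set.Ioi 0)) (nhds 0) := by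
        have : Tendsto (fun t : ℝ => t^2 * (y^4 * (5/96))) (nhds 0) (nhds (0^2 * (y^4*(5/96)))) := by
          apply Tendsto.mul_const
          exact (continuous_pow 2).tendsto 0
        simpa using this.mono_left nhdsWithin_le_nhds
      have hsq := squeeze_zero_norm' hbound hgto
      exact tendsto_sub_nhds_zero_iff.mp hsq
  have hlt : E2/4 < E2/2 := by linarith
  have hev : ∀ᶠ t in nhdsWithin (0:ℝ) (Set.Ioi 0), E2/4 < ∫ ω, F t ω ∂ℙ :=
    hlim.eventually (eventually_gt_nhds hlt)
  rw [eventually_iff] at hev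
  obtain ⟨u, hu0, hsub⟩ := mem_nhdsGT_iff_exists_Ioo_subset.1 hev
  have hu0' : (0:ℝ) < u := hu0
  refine ⟨u/2, by positivity, ?_⟩
  intro t ht0 htu
  have htm : t ∈ Set.Ioo (0:ℝ) u := ⟨ht0, by linarith⟩
  have h4 : E2/4 < ∫ ω, F t ω ∂ℙ := hsub htm
  have hmc : Measurable (fun ω => Real.cos (t * J0 ω)) :=
    Real.measurable_cos.comp (hm.const_mul t)
  have hintc : Integrable (fun ω => Real.cos (t * J0 ω)) ℙ :=
    integrable_of_bound hmc.aestronglyMeasurable 1 (fun ω => by simpa using Real.abs_cos_le_one _)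
  have h5 : ∫ ω, F t ω ∂ℙ = (1 - ∫ ω, Real.cos (t * J0 ω) ∂ℙ)/t^2 := by
    rw [hF]
    simp only
    rw [integral_div, integral_sub (integrable_const 1) hintc]
    simp
  rw [h5] at h4
  rw [lt_div_iff₀ (by positivity)] at h4
  linarith



lemma expect_Kker (u : ℝ) (hu : 0 < u) (S : Ω → ℝ) (hS : Measurable S) :
    ∫ ω, Kker u (S ω) ∂ℙ
      = ∫ t in Set.Ioc (0:ℝ) u, ((1 - t/u) * ∫ ω, Real.cos (t * S ω) ∂ℙ) := by
  set μ : Measure ℝ := volume.restrict (Set.Ioc 0 u) with hμ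
  haveI : IsFiniteMeasure μ := by
    constructor
    rw [hμ, Measure.restrict_apply_univ]
    exact measure_Ioc_lt_top
  set f : ℝ → Ω → ℝ := fun t ω => (1 - t/u) * Real.cos (t * S ω) with hf
  have hmeas : Measurable (Function.uncurry f) := by
    apply Measurable.mul
    · exact (measurable_fst.div_const u).const_sub 1
    · exact Real.measurable_cos.comp (measurable_fst.mul (hS.comp measurable_snd))
  have hae : ∀ᵐ p ∂(μ.prod (ℙ : Measure Ω)), p ∈ Set.Ioc (0:ℝ) u ×ˢ (Set.univ : Set Ω) := by
    have : μ.prod (ℙ : Measure Ω) = ((volume : Measure ℝ).prod (ℙ : Measure Ω)).restrict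
        (Set.Ioc 0 u ×ˢ (Set.univ : Set Ω)) := by
      rw [hμ, ← Measure.prod_restrict, Measure.restrict_univ]
    rw [this]
    exact ae_restrict_mem (measurableSet_Ioc.prod MeasurableSet.univ)
  have hint : Integrable (Function.uncurry f) (μ.prod ℙ) := by
    apply Integrable.mono' (integrable_const 1) hmeas.aestronglyMeasurable
    filter_upwards [hae] with p hp
    have h1 : 0 < p.1 := hp.1.1
    have h2 : p.1 ≤ u := hp.1.2
    have h3 : |1 - p.1/u| ≤ 1 := by
      rw [abs_le]
      constructor
      · have : p.1/u ≤ 1 := by rw [div_le_one hu]; exact h2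
        linarith
      · have : 0 < p.1/u := by positivity
        linarith
    calc ‖Function.uncurry f p‖ = |1 - p.1/u| * |Real.cos (p.1 * S p.2)| := by
          simp [hf, Function.uncurry, abs_mul]
      _ ≤ 1 * 1 := mul_le_mul h3 (Real.abs_cos_le_one _) (abs_nonneg _) zero_le_one
      _ = 1 := by norm_num
  have hswap := integral_integral_swap (f := f) hint
  have hL : (∫ t, (∫ ω, f t ω ∂ℙ) ∂μ) = ∫ t in Set.Ioc (0:ℝ) u, ((1 - t/u) * ∫ ω, Real.cos (t * S ω) ∂ℙ) := by
    apply integral_congr_ae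
    apply Filter.Eventually.of_forall
    intro t
    simp only [hf]
    rw [integral_const_mul]
  have hR : (∫ ω, (∫ t, f t ω ∂μ) ∂ℙ) = ∫ ω, Kker u (S ω) ∂ℙ := by
    apply integral_congr_ae
    apply Filter.Eventually.of_forall
    intro ω
    show (∫ t, f t ω ∂μ) = Kker u (S ω)
    have : ∫ t, f t ω ∂μ = ∫ t in (0:ℝ)..u, (1 - t/u) * Real.cos (t * S ω) := by
      rw [intervalIntegral.integral_of_le hu.le]
    rw [this, integral_triangle_cos u (S ω) hu]
  rw [← hL, hswap, hR]

lemma triangle_pow_to_zero (u c : ℝ) (hu : 0 < u) (φ : ℝ → ℝ) (hφcont : Continuous φ)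
    (hφ0 : ∀ t, t ∈ Set.Ioc (0:ℝ) u → 0 ≤ φ t) (hc : 0 < c)
    (hφ1 : ∀ t, t ∈ Set.Ioc (0:ℝ) u → φ t ≤ 1 - c * t^2)
    (hcu : c * u^2 ≤ 1) :
    Tendsto (fun m : ℕ => ∫ t in Set.Ioc (0:ℝ) u, ((1 - t/u) * φ t ^ m)) atTop (nhds 0) := by
  have key : Tendsto (fun m : ℕ => ∫ t in Set.Ioc (0:ℝ) u, ((1 - t/u) * φ t ^ m)) atTop
      (nhds (∫ t in Set.Ioc (0:ℝ) u, (0:ℝ))) := by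
    apply tendsto_integral_filter_of_dominated_convergence (fun _ => (1:ℝ))
    · apply Filter.Eventually.of_forall
      intro m
      exact (Continuous.aestronglyMeasurable (by fun_prop))
    · apply Filter.Eventually.of_forall
      intro m
      filter_upwards [ae_restrict_mem measurableSet_Ioc] with t ht
      have h1 : 0 ≤ φ t := hφ0 t ht
      have h2 : φ t ≤ 1 - c * t^2 := hφ1 t ht
      have h3 : φ t ≤ 1 := by nlinarith [mul_nonneg hc.le (sq_nonneg t)]
      have h4 : |1 - t/u| ≤ 1 := by
        rw [abs_le]
        have h5 : t/u ≤ 1 := by rw [div_le_one hu]; exact ht.2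
        have h6 : 0 < t/u := div_pos ht.1 hu
        constructor <;> linarith
      rw [Real.norm_eq_abs, abs_mul, abs_pow, abs_of_nonneg h1]
      calc |1 - t/u| * φ t ^ m ≤ 1 * 1 := by
            apply mul_le_mul h4 (pow_le_one₀ h1 h3) (by positivity) zero_le_one
        _ = 1 := by norm_num
    · exact integrable_const 1
    · filter_upwards [ae_restrict_mem measurableSet_Ioc] with t ht
      have h1 : 0 ≤ φ t := hφ0 t ht
      have h2 : φ t < 1 := by
        have := hφ1 t ht
        nlinarith [mul_pos hc (pow_pos ht.1 2)]
      have : Tendsto (fun m : ℕ => φ t ^ m) atTop (nhds 0) := by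
        apply tendsto_pow_atTop_nhds_zero_of_abs_lt_one
        rw [abs_of_nonneg h1]; exact h2
      simpa using this.const_mul (1 - t/u)

  simpa using key


lemma tanh_sq_abs (x : ℝ) : Real.tanh x ^ 2 = Real.tanh |x| ^ 2 := by
  rcases le_or_gt 0 x with h | h
  · rw [abs_of_nonneg h]
  · rw [abs_of_neg h, Real.tanh_neg]; ring

lemma pointwise_tanh_bound (β u s : ℝ) (n : ℕ) (hβ : 0 < β) (hu : 0 < u) :
    1 - Real.tanh (β * s) ^ (2*n) ≤ n * (1 - Real.tanh (β/u)^2)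
      + (n / (2/π^2 * u)) * Kker u s := by
  have hpi : (0:ℝ) < 2/π^2 * u := by positivity
  have hx0 : (0:ℝ) ≤ Real.tanh (β*s)^2 := sq_nonneg _
  have hx1 : Real.tanh (β*s)^2 ≤ 1 := mytanh_sq_le_one _
  have h1 : 1 - Real.tanh (β * s) ^ (2*n) ≤ n * (1 - Real.tanh (β*s)^2) := by
    have : Real.tanh (β * s) ^ (2*n) = (Real.tanh (β*s)^2)^n := by
      rw [← pow_mul]
    rw [this]
    exact one_sub_pow_le_n hx0 hx1 n
  rcases le_or_gt (|s|) (1/u) with hs | hs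
  · have h2 : (n / (2/π^2 * u)) * Kker u s ≥ n := by
      have := Kker_ge hu hs
      rw [ge_iff_le, div_mul_eq_mul_div, le_div_iff₀ hpi]
      calc (n:ℝ) * (2/π^2*u) ≤ n * Kker u s := by
            apply mul_le_mul_of_nonneg_left this (Nat.cast_nonneg n)
        _ = n * Kker u s := rfl
    have h3 : (n:ℝ) * (1 - Real.tanh (β*s)^2) ≤ n := by nlinarith [Nat.cast_nonneg (α := ℝ) n]
    have h4 : (0:ℝ) ≤ n * (1 - Real.tanh (β/u)^2) := by
      have := mytanh_sq_le_one (β/u); nlinarith [Nat.cast_nonneg (α := ℝ) n]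
    linarith
  · have hβu : 0 ≤ β/u := by positivity
    have h2 : Real.tanh (β/u)^2 ≤ Real.tanh (β*s)^2 := by
      rw [tanh_sq_abs (β*s)]
      have habs : β/u ≤ |β*s| := by
        rw [abs_mul, abs_of_pos hβ]
        have h9 : 1 < |s| * u := (div_lt_iff₀ hu).1 hs
        rw [div_le_iff₀ hu]
        nlinarith [mul_lt_mul_of_pos_left h9 hβ]
      have := mytanh_mono habs
      have h5 : 0 ≤ Real.tanh (β/u) := mytanh_nonneg hβu
      nlinarith
    have h6 : (0:ℝ) ≤ (n / (2/π^2 * u)) * Kker u s := by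
      apply mul_le_mul_of_nonneg_left (Kker_nonneg hu s) (by positivity) |>.trans_eq' (by ring)
    have h7 : (n:ℝ) * (1 - Real.tanh (β*s)^2) ≤ n * (1 - Real.tanh (β/u)^2) := by
      apply mul_le_mul_of_nonneg_left (by linarith) (Nat.cast_nonneg n)
    linarith


lemma mytanh_continuous : Continuous Real.tanh := by
  have : Real.tanh = fun x => Real.sinh x / Real.cosh x := by
    funext x; exact Real.tanh_eq_sinh_div_cosh x
  rw [this]
  exact Real.continuous_sinh.div Real.continuous_cosh (fun x => (Real.cosh_pos x).ne')

theorem a_tendsto (β : ℝ) (hβ : 0 < β) (n : ℕ)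
    (J : ℕ → Ω → ℝ) (hJmeas : ∀ ν, Measurable (J ν))
    (hJindep : iIndepFun J ℙ)
    (hJid : ∀ ν, IdentDistrib (J ν) (J 0) ℙ ℙ)
    (hJsymm : Measure.map (J 0) ℙ = Measure.map (fun ω => -J 0 ω) ℙ)
    (hJsq : Integrable (fun ω => (J 0 ω) ^ 2) ℙ)
    (hJpos : 0 < ∫ ω, (J 0 ω) ^ 2 ∂ℙ) :
    Tendsto (fun m : ℕ => ∫ ω, Real.tanh (β * ∑ ν ∈ Finset.range m, J ν ω) ^ (2 * n) ∂ℙ)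
      atTop (nhds 1) := by
  set φ : ℝ → ℝ := fun t => ∫ ω, Real.cos (t * J 0 ω) ∂ℙ with hφ
  set E2 : ℝ := ∫ ω, (J 0 ω)^2 ∂ℙ with hE2
  -- continuity of φ
  have hφcont : Continuous φ := by
    apply continuous_of_dominated (bound := fun _ => (1:ℝ))
    · intro t
      exact ((Real.measurable_cos.comp ((hJmeas 0).const_mul t)).aestronglyMeasurable)
    · intro t
      exact Filter.Eventually.of_forall fun ω => by simpa using Real.abs_cos_le_one _
    · exact integrable_const 1
    · exact Filter.Eventually.of_forall fun ω => by fun_prop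
  obtain ⟨δ, hδ, hquad⟩ := phi_quadratic_bound (J 0) (hJmeas 0) hJsq hJpos
  set c : ℝ := E2/4 with hc
  have hcpos : 0 < c := by rw [hc]; positivity
  -- measurability and basic bounds of a_m
  set S : ℕ → Ω → ℝ := fun m ω => ∑ ν ∈ Finset.range m, J ν ω with hS
  have hSmeas : ∀ m, Measurable (S m) := by
    intro m; apply Finset.measurable_sum; intro i _; exact hJmeas i
  set a : ℕ → ℝ := fun m => ∫ ω, Real.tanh (β * S m ω) ^ (2 * n) ∂ℙ with ha
  have htanhmeas : ∀ m, Measurable (fun ω => Real.tanh (β * S m ω) ^ (2*n)) := by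
    intro m
    exact (mytanh_continuous.measurable.comp ((hSmeas m).const_mul β)).pow_const _
  have htanhint : ∀ m, Integrable (fun ω => Real.tanh (β * S m ω) ^ (2*n)) ℙ := by
    intro m
    apply integrable_of_bound (htanhmeas m).aestronglyMeasurable 1
    intro ω
    rw [Real.norm_eq_abs, abs_pow]
    apply pow_le_one₀ (abs_nonneg _)
    rw [abs_le]
    have h1 := mytanh_sq_le_one (β * S m ω)
    constructor <;> nlinarith [sq_nonneg (Real.tanh (β * S m ω) + 1), sq_nonneg (Real.tanh (β * S m ω) - 1)]
  have hale : ∀ m, a m ≤ 1 := by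
    intro m
    rw [ha]
    calc ∫ ω, Real.tanh (β * S m ω) ^ (2*n) ∂ℙ ≤ ∫ _ω, (1:ℝ) ∂ℙ := by
          apply integral_mono (htanhint m) (integrable_const 1)
          intro ω
          show Real.tanh (β * S m ω) ^ (2*n) ≤ 1
          rw [pow_mul]
          exact pow_le_one₀ (sq_nonneg _) (mytanh_sq_le_one _)
      _ = 1 := by simp
  rw [Metric.tendsto_atTop]
  intro ε hε
  -- choose u
  have hu_ev : ∀ᶠ u in nhdsWithin (0:ℝ) (Set.Ioi 0),
      (0 < u ∧ u ≤ δ ∧ c * u^2 ≤ 1 ∧ E2 * u^2 ≤ 1 ∧ (n:ℝ) * (1 - Real.tanh (β/u)^2) < ε/2) := by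
    have e1 : ∀ᶠ u in nhdsWithin (0:ℝ) (Set.Ioi 0), 0 < u := eventually_mem_nhdsWithin
    have e2 : ∀ᶠ u in nhdsWithin (0:ℝ) (Set.Ioi 0), u ≤ δ :=
      ((eventually_le_nhds hδ).filter_mono nhdsWithin_le_nhds)
    have e3 : ∀ᶠ u in nhdsWithin (0:ℝ) (Set.Ioi 0), c * u^2 ≤ 1 := by
      have ht : Tendsto (fun u : ℝ => c * u^2) (nhds 0) (nhds 0) := by
        have := ((continuous_pow 2).tendsto (0:ℝ)).const_mul c
        simpa using this
      exact ((ht.eventually (eventually_le_nhds one_pos)).filter_mono nhdsWithin_le_nhds)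
    have e4 : ∀ᶠ u in nhdsWithin (0:ℝ) (Set.Ioi 0), E2 * u^2 ≤ 1 := by
      have ht : Tendsto (fun u : ℝ => E2 * u^2) (nhds 0) (nhds 0) := by
        have := ((continuous_pow 2).tendsto (0:ℝ)).const_mul E2
        simpa using this
      exact ((ht.eventually (eventually_le_nhds one_pos)).filter_mono nhdsWithin_le_nhds)
    have e5 : ∀ᶠ u in nhdsWithin (0:ℝ) (Set.Ioi 0), (n:ℝ) * (1 - Real.tanh (β/u)^2) < ε/2 := by
      have ht1 : Tendsto (fun u : ℝ => β/u) (nhdsWithin (0:ℝ) (Set.Ioi 0)) atTop := by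
        have := tendsto_inv_nhdsGT_zero.const_mul_atTop hβ
        simpa [div_eq_mul_inv] using this
      have ht2 : Tendsto (fun u : ℝ => (n:ℝ) * (1 - Real.tanh (β/u)^2))
          (nhdsWithin (0:ℝ) (Set.Ioi 0)) (nhds ((n:ℝ) * (1 - 1^2))) :=
        (((mytanh_tendsto.comp ht1).pow 2).const_sub 1).const_mul (n:ℝ)
      have : ((n:ℝ) * (1 - 1^2)) = 0 := by ring
      rw [this] at ht2
      exact ht2.eventually (eventually_lt_nhds (by positivity))
    filter_upwards [e1, e2, e3, e4, e5] with u h1 h2 h3 h4 h5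
    exact ⟨h1, h2, h3, h4, h5⟩
  obtain ⟨u, hu0, huδ, hcu, hE2u, htanhu⟩ := hu_ev.exists
  -- properties of φ on (0, u]
  have hφ0 : ∀ t, t ∈ Set.Ioc (0:ℝ) u → 0 ≤ φ t := by
    intro t ht
    have h1 := phi_lower (J 0) (hJmeas 0) hJsq t
    have h2 : t^2 ≤ u^2 := by nlinarith [ht.1, ht.2]
    have h3 : t^2/2 * E2 ≤ 1/2 := by nlinarith [hJpos]
    show (0:ℝ) ≤ ∫ ω, Real.cos (t * J 0 ω) ∂ℙ
    linarith
  have hφ1 : ∀ t, t ∈ Set.Ioc (0:ℝ) u → φ t ≤ 1 - c * t^2 := by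
    intro t ht
    exact hquad t ht.1 (le_trans ht.2 huδ)
  -- the integral I m tends to 0
  have htz := triangle_pow_to_zero u c hu0 φ hφcont hφ0 hcpos hφ1 (by nlinarith [hcpos.le, hJpos])
  have hczero : (0:ℝ) < 2/π^2 * u := by positivity
  have hIev : ∀ᶠ m in atTop, (n / (2/π^2 * u)) *
      (∫ t in Set.Ioc (0:ℝ) u, ((1 - t/u) * φ t ^ m)) < ε/2 := by
    have h0 : Tendsto (fun m : ℕ => ((n:ℝ) / (2/π^2 * u)) *
        ∫ t in Set.Ioc (0:ℝ) u, ((1 - t/u) * φ t ^ m)) atTop (nhds 0) := by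
      simpa using htz.const_mul ((n:ℝ) / (2/π^2 * u))
    exact h0.eventually (eventually_lt_nhds (by positivity : (0:ℝ) < ε/2))
  obtain ⟨N, hN⟩ := hIev.exists_forall_of_atTop
  refine ⟨N, fun m hm => ?_⟩
  -- key bound for a m
  have hKint : Integrable (fun ω => Kker u (S m ω)) ℙ := by
    apply integrable_of_bound ((measurable_Kker u).comp (hSmeas m)).aestronglyMeasurable (u/2)
    intro ω
    show |Kker u (S m ω)| ≤ u/2
    rw [abs_of_nonneg (Kker_nonneg hu0 _)]
    exact Kker_le hu0 _
  have hbound : 1 - a m ≤ (n:ℝ) * (1 - Real.tanh (β/u)^2)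
      + (n / (2/π^2 * u)) * ∫ ω, Kker u (S m ω) ∂ℙ := by
    have hint2 : Integrable (fun ω => (n:ℝ) * (1 - Real.tanh (β/u)^2)
        + (n / (2/π^2 * u)) * Kker u (S m ω)) ℙ :=
      (integrable_const _).add (hKint.const_mul _)
    have hint1 : Integrable (fun ω => 1 - Real.tanh (β * S m ω) ^ (2*n)) ℙ :=
      (integrable_const 1).sub (htanhint m)
    have hmono := integral_mono hint1 hint2 (fun ω => pointwise_tanh_bound β u (S m ω) n hβ hu0)
    have hsplit : ∫ ω, ((n:ℝ) * (1 - Real.tanh (β/u)^2) + ((n:ℝ) / (2/π^2 * u)) * Kker u (S m ω)) ∂ℙ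
        = (n:ℝ) * (1 - Real.tanh (β/u)^2) + ((n:ℝ) / (2/π^2 * u)) * ∫ ω, Kker u (S m ω) ∂ℙ := by
      rw [integral_add (integrable_const _) (hKint.const_mul _), integral_const, integral_const_mul]
      simp
    have hone : ∫ ω, (1 - Real.tanh (β * S m ω) ^ (2*n)) ∂ℙ = 1 - a m := by
      rw [integral_sub (integrable_const 1) (htanhint m), integral_const]
      simp [ha]
    rw [hone, hsplit] at hmono
    exact hmono
  have hKeq : ∫ ω, Kker u (S m ω) ∂ℙ = ∫ t in Set.Ioc (0:ℝ) u, ((1 - t/u) * φ t ^ m) := by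
    rw [expect_Kker u hu0 (S m) (hSmeas m)]
    apply setIntegral_congr_fun measurableSet_Ioc
    intro t ht
    have hcf := charfun_sum J hJmeas hJindep hJid hJsymm t m
    show (1 - t/u) * ∫ ω, Real.cos (t * ∑ ν ∈ Finset.range m, J ν ω) ∂ℙ = (1 - t/u) * φ t ^ m
    rw [hcf]
  rw [hKeq] at hbound
  have h1 := hN m hm
  have h2 : 1 - a m < ε := by linarith
  rw [Real.dist_eq, abs_sub_comm, abs_of_nonneg (by linarith [hale m])]
  linarith

end ProbAux

/-- Let `β > 0`, `n ≥ 1`, and `J` symmetric with `0 < E[J²] < ∞`; let `(J_ν)`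
be i.i.d. copies of `J` and `M_α` Poisson of mean `2α`, independent of `(J_ν)`. Then
`q̃_{2n}(α) := E[tanh^{2n}(β ∑_{ν=1}^{M_α} J_ν)]` (written as a Poisson mixture) is
continuous on `[0,∞)`, vanishes at `0`, tends to `1` at `∞`, and attains every value
`x ∈ [0,1)`. -/
theorem trial_multioverlap_attains (β : ℝ) (hβ : 0 < β) (n : ℕ) (hn : 1 ≤ n)
    (Ω : Type) [MeasureSpace Ω] [IsProbabilityMeasure (ℙ : Measure Ω)]
    (J : ℕ → Ω → ℝ) (hJmeas : ∀ ν, Measurable (J ν))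
    (hJindep : iIndepFun J ℙ)
    (hJid : ∀ ν, IdentDistrib (J ν) (J 0) ℙ ℙ)
    (hJsymm : Measure.map (J 0) ℙ = Measure.map (fun ω => -J 0 ω) ℙ)
    (hJsq : Integrable (fun ω => (J 0 ω) ^ 2) ℙ)
    (hJpos : 0 < ∫ ω, (J 0 ω) ^ 2 ∂ℙ) :
    ContinuousOn
        (fun α : ℝ => ∑' m : ℕ, poissonWeight (2 * α) m *
          ∫ ω, Real.tanh (β * ∑ ν ∈ Finset.range m, J ν ω) ^ (2 * n) ∂ℙ)
        (Set.Ici 0) ∧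
      (∑' m : ℕ, poissonWeight (2 * 0) m *
          ∫ ω, Real.tanh (β * ∑ ν ∈ Finset.range m, J ν ω) ^ (2 * n) ∂ℙ) = 0 ∧
      Tendsto
        (fun α : ℝ => ∑' m : ℕ, poissonWeight (2 * α) m *
          ∫ ω, Real.tanh (β * ∑ ν ∈ Finset.range m, J ν ω) ^ (2 * n) ∂ℙ)
        atTop (nhds 1) ∧
      ∀ x ∈ Set.Ico (0 : ℝ) 1, ∃ α : ℝ, 0 ≤ α ∧
        (∑' m : ℕ, poissonWeight (2 * α) m *
          ∫ ω, Real.tanh (β * ∑ ν ∈ Finset.range m, J ν ω) ^ (2 * n) ∂ℙ) = x := by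
  classical
  set a : ℕ → ℝ := fun m => ∫ ω, Real.tanh (β * ∑ ν ∈ Finset.range m, J ν ω) ^ (2 * n) ∂ℙ
    with ha
  set F : ℝ → ℝ := fun α => ∑' m : ℕ, poissonWeight (2 * α) m * a m with hF
  have hSmeas : ∀ m, Measurable (fun ω => ∑ ν ∈ Finset.range m, J ν ω) := by
    intro m; apply Finset.measurable_sum; intro i _; exact hJmeas i
  have htanhint : ∀ m, Integrable (fun ω => Real.tanh (β * ∑ ν ∈ Finset.range m, J ν ω) ^ (2*n)) ℙ := by
    intro m
    apply integrable_of_bound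
      ((mytanh_continuous.measurable.comp ((hSmeas m).const_mul β)).pow_const _).aestronglyMeasurable 1
    intro ω
    rw [Real.norm_eq_abs, abs_pow, pow_mul, ← abs_pow]
    apply pow_le_one₀ (abs_nonneg _)
    rw [abs_of_nonneg (sq_nonneg _)]
    exact mytanh_sq_le_one _
  have ha0 : ∀ m, 0 ≤ a m := by
    intro m
    apply integral_nonneg
    intro ω
    show (0:ℝ) ≤ Real.tanh (β * ∑ ν ∈ Finset.range m, J ν ω) ^ (2*n)
    rw [pow_mul]
    positivity
  have ha1 : ∀ m, a m ≤ 1 := by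
    intro m
    calc a m ≤ ∫ _ω, (1:ℝ) ∂ℙ := by
          apply integral_mono (htanhint m) (integrable_const 1)
          intro ω
          show Real.tanh (β * ∑ ν ∈ Finset.range m, J ν ω) ^ (2*n) ≤ 1
          rw [pow_mul]
          exact pow_le_one₀ (sq_nonneg _) (mytanh_sq_le_one _)
      _ = 1 := by simp
  have hsummable : ∀ {α : ℝ}, 0 ≤ α → Summable (fun m => poissonWeight (2*α) m * a m) := by
    intro α hα
    apply Summable.of_nonneg_of_le
      (fun m => mul_nonneg (poissonWeight_nonneg (by linarith) m) (ha0 m))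
      (fun m => ?_) (poissonWeight_hasSum (2*α)).summable
    calc poissonWeight (2*α) m * a m ≤ poissonWeight (2*α) m * 1 :=
          mul_le_mul_of_nonneg_left (ha1 m) (poissonWeight_nonneg (by linarith) m)
      _ = poissonWeight (2*α) m := mul_one _
  -- continuity
  have hcont : ContinuousOn F (Set.Ici 0) := by
    intro α₀ hα₀
    have hα₀' : (0:ℝ) ≤ α₀ := hα₀
    set C : ℝ := α₀ + 1 with hC
    have hu : Summable (fun m : ℕ => (2*C)^m / m.factorial) := Real.summable_pow_div_factorial _
    have hb : ∀ (m : ℕ) (x : ℝ), x ∈ Set.Icc (0:ℝ) C →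
        ‖poissonWeight (2*x) m * a m‖ ≤ (2*C)^m / m.factorial := by
      intro m x hx
      rw [norm_mul, Real.norm_eq_abs, Real.norm_eq_abs,
        abs_of_nonneg (poissonWeight_nonneg (by linarith [hx.1]) m), abs_of_nonneg (ha0 m)]
      calc poissonWeight (2*x) m * a m ≤ poissonWeight (2*x) m * 1 :=
            mul_le_mul_of_nonneg_left (ha1 m) (poissonWeight_nonneg (by linarith [hx.1]) m)
        _ = Real.exp (-(2*x)) * (2*x)^m / m.factorial := by rw [mul_one, poissonWeight]
        _ ≤ 1 * (2*C)^m / m.factorial := by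
            have hexp : Real.exp (-(2*x)) ≤ 1 := by
              rw [← Real.exp_zero]
              exact Real.exp_le_exp.2 (by linarith [hx.1])
            gcongr
            all_goals first | exact hexp | exact pow_nonneg (by linarith [hx.1]) m | linarith [hx.1, hx.2] | positivity
        _ = (2*C)^m / m.factorial := by rw [one_mul]
    have hTU := tendstoUniformlyOn_tsum hu hb
    have hContOn : ContinuousOn F (Set.Icc 0 C) := by
      apply hTU.continuousOn
      apply Filter.Frequently.of_forall
      intro t
      apply continuousOn_finset_sum
      intro m _
      exact ((poissonWeight_continuous m).mul continuous_const).continuousOn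
    have hmem : Set.Icc (0:ℝ) C ∈ nhdsWithin α₀ (Set.Ici 0) := by
      apply Filter.mem_of_superset
        (inter_mem self_mem_nhdsWithin (mem_nhdsWithin_of_mem_nhds (Iio_mem_nhds (by linarith : α₀ < C))))
      rintro x ⟨hx0, hx1⟩
      exact ⟨hx0, le_of_lt hx1⟩
    exact (hContOn.continuousWithinAt ⟨hα₀', by linarith⟩).mono_of_mem_nhdsWithin hmem
  -- value at zero
  have hzero : F 0 = 0 := by
    have : (fun m : ℕ => poissonWeight (2*0) m * a m) = fun _ => (0:ℝ) := by
      funext m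
      cases m with
      | zero =>
        have ha00 : a 0 = 0 := by
          rw [ha]
          have : (fun ω => Real.tanh (β * ∑ ν ∈ Finset.range 0, J ν ω) ^ (2*n)) = fun _ => (0:ℝ) := by
            funext ω
            rw [Finset.range_zero, Finset.sum_empty, mul_zero, Real.tanh_zero]
            exact zero_pow (by omega)
          simp only
          rw [this, integral_zero]
        rw [ha00, mul_zero]
      | succ k =>
        have : poissonWeight (2*0) (k+1) = 0 := by
          rw [poissonWeight]
          norm_num
        rw [this, zero_mul]
    show (∑' m : ℕ, poissonWeight (2*(0:ℝ)) m * a m) = 0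
    rw [this, tsum_zero]
  -- tendsto 1
  have htend : Tendsto F atTop (nhds 1) := by
    rw [Metric.tendsto_nhds]
    intro ε hε
    have hatd := a_tendsto β hβ n J hJmeas hJindep hJid hJsymm hJsq hJpos
    rw [Metric.tendsto_atTop] at hatd
    obtain ⟨M, hM⟩ := hatd (ε/4) (by positivity)
    have hfin : Tendsto (fun α : ℝ => ∑ m ∈ Finset.range M, poissonWeight (2*α) m) atTop (nhds 0) := by
      have := tendsto_finset_sum (Finset.range M)
        (fun m _ => poissonWeight_tendsto_zero m)
      simpa using this
    have hev1 : ∀ᶠ α : ℝ in atTop, ∑ m ∈ Finset.range M, poissonWeight (2*α) m < ε/4 :=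
      hfin.eventually (eventually_lt_nhds (by positivity))
    filter_upwards [hev1, eventually_ge_atTop (0:ℝ)] with α hα1 hα0
    -- show dist (F α) 1 < ε
    have hws : Summable (fun m => poissonWeight (2*α) m) := (poissonWeight_hasSum (2*α)).summable
    have has : Summable (fun m => poissonWeight (2*α) m * a m) := hsummable hα0
    have hw1 : ∑' m, poissonWeight (2*α) m = 1 := (poissonWeight_hasSum (2*α)).tsum_eq
    have hFle : F α ≤ 1 := by
      rw [hF, ← hw1]
      apply Summable.tsum_le_tsum _ has hws
      intro m
      calc poissonWeight (2*α) m * a m ≤ poissonWeight (2*α) m * 1 :=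
            mul_le_mul_of_nonneg_left (ha1 m) (poissonWeight_nonneg (by linarith) m)
        _ = poissonWeight (2*α) m := mul_one _
    have hkey : 1 - F α ≤ (∑ m ∈ Finset.range M, poissonWeight (2*α) m) + ε/4 := by
      have hsub : 1 - F α = ∑' m, (poissonWeight (2*α) m * (1 - a m)) := by
        have h1 : ∑' m, (poissonWeight (2*α) m * (1 - a m))
            = (∑' m, poissonWeight (2*α) m) - ∑' m, poissonWeight (2*α) m * a m := by
          rw [← Summable.tsum_sub hws has]
          congr 1
          funext m
          ring
        rw [h1, hw1]
      rw [hsub]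
      set g : ℕ → ℝ := fun m => (if m < M then poissonWeight (2*α) m else 0)
        + poissonWeight (2*α) m * (ε/4) with hg
      have hgsum : Summable g := by
        apply Summable.add _ (hws.mul_right _)
        apply hws.summable_of_eq_zero_or_self
        intro m
        by_cases h : m < M
        · right; rw [if_pos h]
        · left; rw [if_neg h]
      have hgle : ∀ m, poissonWeight (2*α) m * (1 - a m) ≤ g m := by
        intro m
        have hwnn := poissonWeight_nonneg (by linarith : (0:ℝ) ≤ 2*α) m
        by_cases h : m < M
        · rw [hg]
          simp only [if_pos h]
          have h1 : poissonWeight (2*α) m * (1 - a m) ≤ poissonWeight (2*α) m * 1 :=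
            mul_le_mul_of_nonneg_left (by linarith [ha0 m]) hwnn
          have h2 : 0 ≤ poissonWeight (2*α) m * (ε/4) := by positivity
          linarith
        · rw [hg]
          simp only [if_neg h]
          have hM' := hM m (by omega)
          rw [Real.dist_eq, abs_sub_comm, abs_of_nonneg (by linarith [ha1 m])] at hM'
          have h1 : poissonWeight (2*α) m * (1 - a m) ≤ poissonWeight (2*α) m * (ε/4) :=
            mul_le_mul_of_nonneg_left (by linarith) hwnn
          linarith
      have hsum_int : Summable (fun m => poissonWeight (2*α) m * (1 - a m)) := by
        have : (fun m => poissonWeight (2*α) m * (1 - a m))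
            = fun m => poissonWeight (2*α) m - poissonWeight (2*α) m * a m := by
          funext m; ring
        rw [this]
        exact hws.sub has
      calc ∑' m, (poissonWeight (2*α) m * (1 - a m)) ≤ ∑' m, g m :=
            Summable.tsum_le_tsum hgle hsum_int hgsum
        _ = (∑' m, (if m < M then poissonWeight (2*α) m else 0))
            + ∑' m, poissonWeight (2*α) m * (ε/4) := by
            rw [hg, Summable.tsum_add _ (hws.mul_right _)]
            apply hws.summable_of_eq_zero_or_self
            intro m
            by_cases h : m < M
            · right; rw [if_pos h]
            · left; rw [if_neg h]
        _ = (∑ m ∈ Finset.range M, poissonWeight (2*α) m) + ε/4 := by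
            congr 1
            · rw [tsum_eq_sum (s := Finset.range M) (fun m hm => by
                rw [if_neg (by simpa using hm)])]
              apply Finset.sum_congr rfl
              intro m hm
              rw [if_pos (Finset.mem_range.1 hm)]
            · rw [tsum_mul_right, hw1, one_mul]
      done
    have hF0 : 0 ≤ F α := by
      rw [hF]
      apply tsum_nonneg
      intro m
      exact mul_nonneg (poissonWeight_nonneg (by linarith) m) (ha0 m)
    rw [Real.dist_eq, abs_sub_comm, abs_of_nonneg (by linarith)]
    linarith
  -- conclusion
  refine ⟨hcont, hzero, htend, ?_⟩
  intro x hx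
  have hev : ∀ᶠ α : ℝ in atTop, x < F α := htend.eventually (eventually_gt_nhds hx.2)
  obtain ⟨b, hb1, hb0⟩ := (hev.and (eventually_ge_atTop (0:ℝ))).exists
  have hIVT := intermediate_value_Icc hb0 (hcont.mono (Set.Icc_subset_Ici_self (b := (0:ℝ)) (a := b)))
  have hxmem : x ∈ Set.Icc (F 0) (F b) := by
    rw [hzero]
    exact ⟨hx.1, le_of_lt hb1⟩
  obtain ⟨α, hα1, hα2⟩ := hIVT hxmem
  exact ⟨α, hα1.1, hα2⟩
end
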